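/- Let E be a real inner product space, S ⊆ E a convex set, ρ > 0, and Φ : E → ℝ differentiable on an open set containing S and ρ-strongly convex on S with respect to the norm (i.e., Φ − (ρ/2)·‖·‖² is convex on S). Let 1 ≤ β ≤ B, η > 0, L > 0, let p, q ∈ S, let g ∈ E with ‖g‖ ≤ L, and let y be a point in the domain of differentiability of Φ with ∇Φ(y) = ∇Φ(p) − η·β·g. Then (1/β)·( D_Φ(p, y) − D_Φ(q, y) ) ≤ η²·L²·B/(2ρ). -/

import Mathlib

open scoped RealInnerProductSpace

/-- Gradient inequality for a convex function: the linear approximation lies below. -/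
lemma grad_ineq_aux {E : Type*} [NormedAddCommGroup E] [NormedSpace ℝ E]
    {S : Set E} {f : E → ℝ} {f' : E →L[ℝ] ℝ} {x y : E}
    (hf : ConvexOn ℝ S f) (hx : x ∈ S) (hy : y ∈ S)
    (hd : HasFDerivAt f f' x) : f' (y - x) ≤ f y - f x := by
  set h : ℝ → ℝ := fun t => f (x + t • (y - x)) with hh
  have hline : HasDerivAt (fun t : ℝ => x + t • (y - x)) (y - x) 0 := by
    simpa using ((hasDerivAt_id (0 : ℝ)).smul_const (y - x)).const_add x
  have hd' : HasFDerivAt f f' (x + (0 : ℝ) • (y - x)) := by simpa using hd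
  have h0 : HasDerivAt h (f' (y - x)) 0 := by
    exact hd'.comp_hasDerivAt 0 hline
  have htend : Filter.Tendsto (slope h 0) (nhdsWithin 0 (Set.Ioi 0)) (nhds (f' (y - x))) :=
    (hasDerivAt_iff_tendsto_slope.mp h0).mono_left
      (nhdsWithin_mono 0 (fun t ht => ne_of_gt ht))
  refine le_of_tendsto htend ?_
  filter_upwards [Ioc_mem_nhdsGT_of_mem (Set.mem_Ico.mpr ⟨le_rfl, one_pos⟩)] with t ht
  have ht0 : 0 < t := ht.1
  have ht1 : t ≤ 1 := ht.2
  have hcvx : f ((1 - t) • x + t • y) ≤ (1 - t) * f x + t * f y :=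
    hf.2 hx hy (by linarith) (le_of_lt ht0) (by ring)
  have hpt : x + t • (y - x) = (1 - t) • x + t • y := by
    simp [smul_sub, sub_smul]; abel
  have hht : h t ≤ (1 - t) * f x + t * f y := by rw [hh]; simp only; rw [hpt]; exact hcvx
  have h00 : h 0 = f x := by simp [hh]
  rw [slope_def_field, sub_zero, div_le_iff₀ ht0]
  nlinarith [hht, h00]

/-- per-step bound in the annealed mirror-descent proof.
If `Φ` is `ρ`-strongly convex on a convex set `S`, differentiable on an open
set `U ⊇ S`, `1 ≤ β ≤ B`, `‖g‖ ≤ L`, and `∇Φ(y) = ∇Φ(p) - (η·β)·g`, then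
`(1/β)·(D_Φ(p,y) - D_Φ(q,y)) ≤ η²·L²·B/(2ρ)` for `p, q ∈ S`. -/
theorem stmt_13 {E : Type*} [NormedAddCommGroup E] [InnerProductSpace ℝ E]
    (S U : Set E) (hS : Convex ℝ S) (hU : IsOpen U) (hSU : S ⊆ U)
    (ρ : ℝ) (hρ : 0 < ρ)
    (Φ : E → ℝ) (gradΦ : E → E)
    (hdiff : ∀ x ∈ U, HasFDerivAt Φ (innerSL ℝ (gradΦ x)) x)
    (hstrong : ConvexOn ℝ S (fun x => Φ x - ρ / 2 * ‖x‖ ^ 2))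
    (D : E → E → ℝ) (hD : ∀ p q, D p q = Φ p - Φ q - ⟪gradΦ q, p - q⟫)
    (β B η L : ℝ) (hβ1 : 1 ≤ β) (hβB : β ≤ B) (hη : 0 < η) (hL : 0 < L)
    (p q : E) (hp : p ∈ S) (hq : q ∈ S)
    (g : E) (hg : ‖g‖ ≤ L)
    (y : E) (hy : y ∈ U)
    (hupdate : gradΦ y = gradΦ p - (η * β) • g) :
    (1 / β) * (D p y - D q y) ≤ η ^ 2 * L ^ 2 * B / (2 * ρ) := by
  have hβ0 : 0 < β := lt_of_lt_of_le one_pos hβ1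
  -- derivative of the strongly convex surrogate at p
  have hsq : HasFDerivAt (fun x : E => ‖x‖ ^ 2)
      ((fderivInnerCLM ℝ (p, p)).comp
        ((ContinuousLinearMap.id ℝ E).prod (ContinuousLinearMap.id ℝ E))) p := by
    have h1 : HasFDerivAt (fun x : E => (⟪x, x⟫ : ℝ))
        ((fderivInnerCLM ℝ (p, p)).comp
          ((ContinuousLinearMap.id ℝ E).prod (ContinuousLinearMap.id ℝ E))) p :=
      (hasFDerivAt_id p).inner ℝ (hasFDerivAt_id p)
    have : (fun x : E => (⟪x, x⟫ : ℝ)) = fun x : E => ‖x‖ ^ 2 := by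
      funext x; exact real_inner_self_eq_norm_sq x
    rwa [this] at h1
  have hfd : HasFDerivAt (fun x => Φ x - ρ / 2 * ‖x‖ ^ 2)
      (innerSL ℝ (gradΦ p) - (ρ / 2) • ((fderivInnerCLM ℝ (p, p)).comp
        ((ContinuousLinearMap.id ℝ E).prod (ContinuousLinearMap.id ℝ E)))) p :=
    (hdiff p (hSU hp)).sub (hsq.const_mul (ρ / 2))
  have hgi := grad_ineq_aux hstrong hp hq hfd
  -- unfold the derivative value
  have hval : (innerSL ℝ (gradΦ p) - (ρ / 2) • ((fderivInnerCLM ℝ (p, p)).comp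
        ((ContinuousLinearMap.id ℝ E).prod (ContinuousLinearMap.id ℝ E)))) (q - p)
      = ⟪gradΦ p, q - p⟫ - ρ * ⟪p, q - p⟫ := by
    simp [real_inner_comm]
    ring
  rw [hval] at hgi
  -- strong convexity inequality
  have hnorm : ‖p - q‖ ^ 2 = ‖p‖ ^ 2 - 2 * ⟪p, q⟫ + ‖q‖ ^ 2 := norm_sub_sq_real p q
  have hpq : ⟪p, q - p⟫ = ⟪p, q⟫ - ‖p‖ ^ 2 := by
    rw [inner_sub_right, real_inner_self_eq_norm_sq]
  have hstr : Φ p - Φ q - ⟪gradΦ p, p - q⟫ ≤ -(ρ / 2) * ‖p - q‖ ^ 2 := by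
    have h1 : ⟪gradΦ p, p - q⟫ = -⟪gradΦ p, q - p⟫ := by
      rw [← inner_neg_right]; congr 1; abel
    rw [hpq] at hgi
    have hnorm' : -(ρ / 2) * ‖p - q‖ ^ 2
        = -(ρ / 2) * ‖p‖ ^ 2 + ρ * ⟪p, q⟫ - (ρ / 2) * ‖q‖ ^ 2 := by rw [hnorm]; ring
    rw [h1, hnorm']
    linarith [hgi]
  -- rewrite the Bregman difference
  have hDdiff : D p y - D q y = Φ p - Φ q - ⟪gradΦ p, p - q⟫ + (η * β) * ⟪g, p - q⟫ := by
    rw [hD, hD, hupdate]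
    have : (p - y) - (q - y) = p - q := by abel
    rw [show ⟪gradΦ p - (η * β) • g, p - y⟫ = ⟪gradΦ p, p - y⟫ - (η * β) * ⟪g, p - y⟫ by
      simp [inner_sub_left, real_inner_smul_left],
      show ⟪gradΦ p - (η * β) • g, q - y⟫ = ⟪gradΦ p, q - y⟫ - (η * β) * ⟪g, q - y⟫ by
      simp [inner_sub_left, real_inner_smul_left]]
    have e1 : ⟪gradΦ p, p - y⟫ - ⟪gradΦ p, q - y⟫ = ⟪gradΦ p, p - q⟫ := by
      rw [← inner_sub_right, show p - y - (q - y) = p - q from by abel]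
    have e2 : ⟪g, p - y⟫ - ⟪g, q - y⟫ = ⟪g, p - q⟫ := by
      rw [← inner_sub_right, show p - y - (q - y) = p - q from by abel]
    have e2' : (η * β) * ⟪g, p - y⟫ - (η * β) * ⟪g, q - y⟫ = (η * β) * ⟪g, p - q⟫ := by
      rw [← mul_sub, e2]
    linarith [e1, e2']
  -- inner product bound
  have hinner : ⟪g, p - q⟫ ≤ L * ‖p - q‖ := by
    calc ⟪g, p - q⟫ ≤ ‖g‖ * ‖p - q‖ := real_inner_le_norm g (p - q)
      _ ≤ L * ‖p - q‖ := by
          exact mul_le_mul_of_nonneg_right hg (norm_nonneg _)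
  have hkey : D p y - D q y ≤ -(ρ / 2) * ‖p - q‖ ^ 2 + (η * β) * (L * ‖p - q‖) := by
    rw [hDdiff]
    have : (η * β) * ⟪g, p - q⟫ ≤ (η * β) * (L * ‖p - q‖) :=
      mul_le_mul_of_nonneg_left hinner (by positivity)
    linarith [hstr]
  -- final arithmetic
  rw [div_mul_eq_mul_div, one_mul, div_le_div_iff₀ hβ0 (by positivity)]
  set a := ‖p - q‖ with ha
  have ha0 : 0 ≤ a := norm_nonneg _
  have h2 : (D p y - D q y) * (2 * ρ) ≤ (-(ρ / 2) * a ^ 2 + (η * β) * (L * a)) * (2 * ρ) :=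
    mul_le_mul_of_nonneg_right hkey (by positivity)
  refine h2.trans ?_
  nlinarith [sq_nonneg (ρ * a - η * L * β), mul_le_mul_of_nonneg_left hβB (le_of_lt hβ0),
    sq_nonneg (η * L), mul_pos hη hL, sq_nonneg a, mul_le_mul_of_nonneg_right hβB
      (mul_pos (mul_pos (mul_pos hη hη) (mul_pos hL hL)) hβ0).le]
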